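/- Let Z be a smooth variety of dimension n over an algebraically closed field k of characteristic p > 0, m a positive integer with p | m, L a line bundle on Z, s ∈ H^0(Z, L^m), and X = Z[ᵐ√s] with covering morphism π: X → Z. Then the singular locus of X equals the preimage under π of the set of critical points of s: Sing X = π^{-1}(Crit(s)). -/
import Mathlib

/-!
# Statement 13

Let `Z` be a smooth variety of dimension `n` over an algebraically closed field `k` of
characteristic `p > 0`, `m` a positive integer with `p ∣ m`, `L` a line bundle on `Z`,
`s ∈ H⁰(Z, L^m)` and `X = Z[ᵐ√s]` the cyclic covering, with covering map `π : X → Z`.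
Then `Sing X = π⁻¹(Crit(s))`.

Both sides are local on `Z` and invariant under trivializing `L`, so we model the
statement on a (trivializing) local chart: `Z` is affine `n`-space with coordinates
`x_1, …, x_n`, the section `s` corresponds to a polynomial `g`, and
`X = (y^m - g = 0) ⊆ 𝔸^{n+1}`, with `π` the projection forgetting the last coordinate
`y`.  The singular locus of the hypersurface `X` is the set of points of `X` where all
the partial derivatives of the defining equation vanish, and `Crit(s)` is the vanishing
locus of `d(s)`, i.e. the set of points where all partial derivatives of `g` vanish.
-/

open MvPolynomial

/-- For `X = Z[ᵐ√s] = (y^m - g(x) = 0) ⊆ 𝔸^{n+1}` in characteristic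
`p ∣ m`, the singular locus of `X` equals the preimage under `π : X → Z` of the critical
locus of `s`. -/
theorem singularLocus_cyclic_cover {k : Type*} [Field k] [IsAlgClosed k] {p m n : ℕ}
    [CharP k p] (hp : p.Prime) (hpm : p ∣ m) (hm : 0 < m)
    (g : MvPolynomial (Fin n) k)
    -- the defining equation `y^m - g` of `X` in `𝔸^{n+1}`, `y` being the last variable
    (F : MvPolynomial (Fin (n + 1)) k)
    (hF : F = X (Fin.last n) ^ m - rename Fin.castSucc g)
    -- the covering map `π : X → Z` (restriction of the projection to `X`)
    (π : (Fin (n + 1) → k) → (Fin n → k)) (hπ : ∀ P, π P = P ∘ Fin.castSucc) :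
    -- `Sing X = π⁻¹(Crit s)` (inside `X`)
    {P : Fin (n + 1) → k | eval P F = 0 ∧ ∀ i, eval P (pderiv i F) = 0} =
      {P : Fin (n + 1) → k | eval P F = 0} ∩
        π ⁻¹' {q : Fin n → k | ∀ i, eval q (pderiv i g) = 0} := by
  have hcast : (m : MvPolynomial (Fin (n + 1)) k) = 0 := by
    have : (m : k) = 0 := (CharP.cast_eq_zero_iff k p m).mpr hpm
    rw [← map_natCast (C : k →+* MvPolynomial (Fin (n + 1)) k), this, map_zero]
  have hpow : ∀ i : Fin (n + 1), pderiv i (X (Fin.last n) ^ m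
      : MvPolynomial (Fin (n + 1)) k) = 0 := by
    intro i
    rw [pderiv_pow, hcast]
    ring
  have hderiv : ∀ (i : Fin (n + 1)), pderiv i F =
      - pderiv i (rename Fin.castSucc g) := by
    intro i
    rw [hF, map_sub, hpow, zero_sub]
  ext P
  simp only [Set.mem_setOf_eq, Set.mem_inter_iff, Set.mem_preimage, hπ]
  constructor
  · rintro ⟨h0, hd⟩
    refine ⟨h0, fun j => ?_⟩
    have := hd (Fin.castSucc j)
    rw [hderiv, pderiv_rename (Fin.castSucc_injective n), eval_neg, eval_rename,
      neg_eq_zero] at this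
    exact this
  · rintro ⟨h0, hc⟩
    refine ⟨h0, fun i => ?_⟩
    rw [hderiv, eval_neg, neg_eq_zero]
    induction i using Fin.lastCases with
    | last =>
      rw [pderiv_eq_zero_of_notMem_vars, map_zero]
      intro hmem
      have := vars_rename Fin.castSucc g hmem
      simp only [Finset.mem_image] at this
      obtain ⟨j, -, hj⟩ := this
      exact absurd hj (Fin.castSucc_lt_last j).ne
    | cast j =>
      rw [pderiv_rename (Fin.castSucc_injective n), eval_rename]
      exact hc j
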